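/- arXiv:2002.09982 — 2 statements merged into one kernel-verified Lean document; each statement's English description precedes it below -/
import Mathlib

section
/- Consider the censored GPD log-likelihood l(ξ, σ) = D log(1 - G(T_u; ξ, σ)) + (1 - D) log g(Y; ξ, σ) where D = 1[Y > T_u], Y has the GPD(ξ, σ) with ξ > 0, and T_u > 0. With z = 1 + ξT_u/σ, the Fisher information entry E[-∂²l/∂σ²] equals (1 - z^{-2-1/ξ}) / ((1 + 2ξ)σ²). -/
open MeasureTheory Filter Set

/-- GPD CDF. -/
noncomputable def gpdCDF (ξ σ y : ℝ) : ℝ := 1 - (1 + ξ * y / σ) ^ (-1/ξ)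

/-- GPD density. -/
noncomputable def gpdPDF (ξ σ y : ℝ) : ℝ := σ⁻¹ * (1 + ξ * y / σ) ^ (-1 - 1/ξ)

/-- Censored (Tobit) GPD log-likelihood: l(ξ,σ) = D log(1 - G(T_u)) + (1-D) log g(Y)
with D = 1[Y > T_u]. -/
noncomputable def cll (Tu ξ σ y : ℝ) : ℝ :=
  if Tu < y then Real.log (1 - gpdCDF ξ σ Tu) else Real.log (gpdPDF ξ σ y)

lemma hd_inner (a : ℝ) {s : ℝ} (hs : s ≠ 0) :
    HasDerivAt (fun t : ℝ => 1 + a / t) (-(a / s ^ 2)) s := by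
  have h := ((hasDerivAt_inv hs).const_mul a).const_add 1
  simp only [div_eq_mul_inv]
  refine h.congr_deriv ?_
  ring

lemma hd_quad (a : ℝ) (s : ℝ) :
    HasDerivAt (fun t : ℝ => t ^ 2 + a * t) (2 * s + a) s := by
  have h := (hasDerivAt_pow 2 s).add ((hasDerivAt_id s).const_mul a)
  exact h.congr_deriv (by norm_num)

lemma deriv_branch1 (a p : ℝ) (ha : 0 < a) {s : ℝ} (hs : 0 < s) :
    deriv (fun t : ℝ => Real.log ((1 + a / t) ^ p)) s = -(p * a) * (s ^ 2 + a * s)⁻¹ := by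
  have heq : (fun t : ℝ => Real.log ((1 + a / t) ^ p)) =ᶠ[nhds s]
      (fun t : ℝ => p * Real.log (1 + a / t)) := by
    filter_upwards [Ioi_mem_nhds hs] with t ht
    have ht' : (0:ℝ) < t := ht
    rw [Real.log_rpow (by have := div_pos ha ht'; linarith)]
  rw [heq.deriv_eq]
  have hpos : (0:ℝ) < 1 + a / s := by have := div_pos ha hs; linarith
  have h := ((hd_inner a hs.ne').log hpos.ne').const_mul p
  rw [h.deriv]
  have h1 : s ^ 2 + a * s ≠ 0 := (add_pos (pow_pos hs 2) (mul_pos ha hs)).ne'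
  field_simp

lemma deriv2_branch1 (a p : ℝ) (ha : 0 < a) {σ : ℝ} (hσ : 0 < σ) :
    deriv (deriv (fun t : ℝ => Real.log ((1 + a / t) ^ p))) σ
      = p * a * (2 * σ + a) / (σ ^ 2 + a * σ) ^ 2 := by
  have heq : deriv (fun t : ℝ => Real.log ((1 + a / t) ^ p)) =ᶠ[nhds σ]
      (fun s => -(p * a) * (s ^ 2 + a * s)⁻¹) := by
    filter_upwards [Ioi_mem_nhds hσ] with s hs
    exact deriv_branch1 a p ha hs
  rw [heq.deriv_eq]
  have hne : σ ^ 2 + a * σ ≠ 0 := (add_pos (pow_pos hσ 2) (mul_pos ha hσ)).ne'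
  have h := ((hd_quad a σ).inv hne).const_mul (-(p * a))
  rw [HasDerivAt.deriv (f := fun s => -(p * a) * (s ^ 2 + a * s)⁻¹) h]
  field_simp

lemma deriv_branch2 (b q : ℝ) (hb : 0 < b) {s : ℝ} (hs : 0 < s) :
    deriv (fun t : ℝ => Real.log (t⁻¹ * (1 + b / t) ^ q)) s
      = -s⁻¹ - (q * b) * (s ^ 2 + b * s)⁻¹ := by
  have heq : (fun t : ℝ => Real.log (t⁻¹ * (1 + b / t) ^ q)) =ᶠ[nhds s]
      (fun t : ℝ => -Real.log t + q * Real.log (1 + b / t)) := by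
    filter_upwards [Ioi_mem_nhds hs] with t ht
    have ht' : (0:ℝ) < t := ht
    have hu : (0:ℝ) < 1 + b / t := by have := div_pos hb ht'; linarith
    rw [Real.log_mul (inv_ne_zero ht'.ne') (Real.rpow_pos_of_pos hu q).ne',
      Real.log_inv, Real.log_rpow hu]
  rw [heq.deriv_eq]
  have hu : (0:ℝ) < 1 + b / s := by have := div_pos hb hs; linarith
  have h1 : HasDerivAt (fun t : ℝ => -Real.log t) (-s⁻¹) s := (Real.hasDerivAt_log hs.ne').neg
  have h2 := ((hd_inner b hs.ne').log hu.ne').const_mul q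
  rw [HasDerivAt.deriv (f := fun t => -Real.log t + q * Real.log (1 + b / t)) (h1.add h2)]
  have hq : s ^ 2 + b * s ≠ 0 := (add_pos (pow_pos hs 2) (mul_pos hb hs)).ne'
  field_simp
  ring

lemma deriv2_branch2 (b q : ℝ) (hb : 0 < b) {σ : ℝ} (hσ : 0 < σ) :
    deriv (deriv (fun t : ℝ => Real.log (t⁻¹ * (1 + b / t) ^ q))) σ
      = (σ ^ 2)⁻¹ + q * b * (2 * σ + b) / (σ ^ 2 + b * σ) ^ 2 := by
  have heq : deriv (fun t : ℝ => Real.log (t⁻¹ * (1 + b / t) ^ q)) =ᶠ[nhds σ]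
      (fun s => -s⁻¹ - (q * b) * (s ^ 2 + b * s)⁻¹) := by
    filter_upwards [Ioi_mem_nhds hσ] with s hs
    exact deriv_branch2 b q hb hs
  rw [heq.deriv_eq]
  have hne : σ ^ 2 + b * σ ≠ 0 := (add_pos (pow_pos hσ 2) (mul_pos hb hσ)).ne'
  have h1 : HasDerivAt (fun s : ℝ => -s⁻¹) ((σ ^ 2)⁻¹) σ := by
    exact (hasDerivAt_inv hσ.ne').neg.congr_deriv (neg_neg _)
  have h2 := ((hd_quad b σ).inv hne).const_mul (q * b)
  rw [HasDerivAt.deriv (f := fun s => -s⁻¹ - q * b * (s ^ 2 + b * s)⁻¹) (h1.sub h2)]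
  field_simp
  ring

lemma hd_u (ξ σ : ℝ) (y : ℝ) : HasDerivAt (fun y : ℝ => 1 + ξ * y / σ) (ξ / σ) y := by
  have h := (((hasDerivAt_id y).const_mul ξ).div_const σ).const_add 1
  simpa using h

lemma hd_H (ξ σ : ℝ) (hξ : 0 < ξ) (hσ : 0 < σ) {y : ℝ} (hy : 0 ≤ y) :
    HasDerivAt (fun y : ℝ => (-(ξ * σ ^ 2)⁻¹) * (1 + ξ * y / σ) ^ (-1/ξ)
        + ((1 + ξ) / ((2 * ξ + 1) * ξ * σ ^ 2)) * (1 + ξ * y / σ) ^ (-2 - 1/ξ))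
      ((ξ * σ ^ 3)⁻¹ * ((1 + ξ * y / σ) ^ (-1 - 1/ξ)
        - (1 + ξ) * (1 + ξ * y / σ) ^ (-3 - 1/ξ))) y := by
  have hu : (0:ℝ) < 1 + ξ * y / σ := by
    have := div_nonneg (mul_nonneg hξ.le hy) hσ.le; linarith
  have h1 := ((hd_u ξ σ y).rpow_const (p := -1/ξ) (Or.inl hu.ne')).const_mul (-(ξ * σ ^ 2)⁻¹)
  have h2 := ((hd_u ξ σ y).rpow_const (p := -2 - 1/ξ) (Or.inl hu.ne')).const_mul
    ((1 + ξ) / ((2 * ξ + 1) * ξ * σ ^ 2))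
  refine (h1.add h2).congr_deriv ?_
  rw [show (-1/ξ - 1 : ℝ) = -1 - 1/ξ from by ring,
    show (-2 - 1/ξ - 1 : ℝ) = -3 - 1/ξ from by ring]
  generalize (1 + ξ * y / σ) ^ (-1 - 1/ξ : ℝ) = W1
  generalize (1 + ξ * y / σ) ^ (-3 - 1/ξ : ℝ) = W3
  have h2ξ : (2 * ξ + 1 : ℝ) ≠ 0 := by positivity
  field_simp
  ring

lemma hd_G (ξ σ : ℝ) (hξ : 0 < ξ) (hσ : 0 < σ) {y : ℝ} (hy : 0 ≤ y) :
    HasDerivAt (fun y : ℝ => -(1 + ξ * y / σ) ^ (-1/ξ)) (gpdPDF ξ σ y) y := by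
  have hu : (0:ℝ) < 1 + ξ * y / σ := by
    have := div_nonneg (mul_nonneg hξ.le hy) hσ.le; linarith
  have h1 := ((hd_u ξ σ y).rpow_const (p := -1/ξ) (Or.inl hu.ne')).neg
  refine h1.congr_deriv ?_
  rw [show (-1/ξ - 1 : ℝ) = -1 - 1/ξ from by ring, gpdPDF]
  field_simp

lemma tendsto_G (ξ σ : ℝ) (hξ : 0 < ξ) (hσ : 0 < σ) :
    Tendsto (fun y : ℝ => -(1 + ξ * y / σ) ^ (-1/ξ)) atTop (nhds 0) := by
  have h1 : Tendsto (fun y : ℝ => 1 + ξ * y / σ) atTop atTop := by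
    apply tendsto_atTop_add_const_left
    have := (tendsto_id (α := ℝ)).const_mul_atTop (div_pos hξ hσ)
    refine this.congr fun y => by simp only [id_eq]; ring
  have h2 := (tendsto_rpow_neg_atTop (one_div_pos.mpr hξ)).comp h1
  have h3 := h2.neg
  rw [neg_zero] at h3
  refine h3.congr fun y => by rw [Function.comp_apply, neg_div]

/-- With z = 1 + ξT_u/σ, the Fisher information entry
E[-∂²l/∂σ²] equals (1 - z^{-2-1/ξ}) / ((1+2ξ)σ²), where the expectation is with
respect to the GPD law of Y (expressed via its density on (0,∞)). -/
theorem censored_gpd_fisher_sigma (ξ σ Tu : ℝ) (hξ : 0 < ξ) (hσ : 0 < σ) (hTu : 0 < Tu) :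
    ∫ y in Set.Ioi (0:ℝ),
        (-(deriv (deriv (fun s => cll Tu ξ s y)) σ)) * gpdPDF ξ σ y
      = (1 - (1 + ξ * Tu / σ) ^ (-2 - 1/ξ)) / ((1 + 2*ξ) * σ^2) := by
  have hz : (0:ℝ) < 1 + ξ * Tu / σ := by
    have := div_pos (mul_pos hξ hTu) hσ; linarith
  set C : ℝ := -((-1/ξ) * (ξ * Tu) * (2 * σ + ξ * Tu) / (σ ^ 2 + ξ * Tu * σ) ^ 2) with hCdef
  set F : ℝ → ℝ := fun y => if Tu < y then C
      else -((σ ^ 2)⁻¹ + (-1 - 1/ξ) * (ξ * y) * (2 * σ + ξ * y) / (σ ^ 2 + ξ * y * σ) ^ 2)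
    with hFdef
  -- step 1 : rewrite the integrand
  have hinteg : EqOn (fun y => (-(deriv (deriv (fun s => cll Tu ξ s y)) σ)) * gpdPDF ξ σ y)
      (fun y => F y * gpdPDF ξ σ y) (Ioi 0) := by
    intro y hy
    have hy' : (0:ℝ) < y := hy
    by_cases hcase : Tu < y
    · have hfun : (fun s : ℝ => cll Tu ξ s y)
          = (fun s => Real.log ((1 + ξ * Tu / s) ^ (-1/ξ))) := by
        funext s
        simp only [cll, if_pos hcase, gpdCDF, sub_sub_cancel]
      simp only [hfun, deriv2_branch1 (ξ * Tu) (-1/ξ) (mul_pos hξ hTu) hσ,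
        hFdef, if_pos hcase, hCdef]
    · have hfun : (fun s : ℝ => cll Tu ξ s y)
          = (fun s => Real.log (s⁻¹ * (1 + ξ * y / s) ^ (-1 - 1/ξ))) := by
        funext s
        simp only [cll, if_neg hcase, gpdPDF]
      simp only [hfun, deriv2_branch2 (ξ * y) (-1 - 1/ξ) (mul_pos hξ hy') hσ,
        hFdef, if_neg hcase]
  rw [setIntegral_congr_fun measurableSet_Ioi hinteg]
  -- the explicit integrand on (0, Tu]
  set h₂ : ℝ → ℝ := fun y => (ξ * σ ^ 3)⁻¹ * ((1 + ξ * y / σ) ^ (-1 - 1/ξ)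
    - (1 + ξ) * (1 + ξ * y / σ) ^ (-3 - 1/ξ)) with hh2def
  have hEqIoc : EqOn (fun y => F y * gpdPDF ξ σ y) h₂ (Ioc 0 Tu) := by
    intro y hy
    have hy0 : (0:ℝ) < y := hy.1
    have hcase : ¬ Tu < y := not_lt.mpr hy.2
    have hu : (0:ℝ) < 1 + ξ * y / σ := by
      have := div_pos (mul_pos hξ hy0) hσ; linarith
    have h3 : (1 + ξ * y / σ) ^ (-1 - 1/ξ : ℝ)
        = (1 + ξ * y / σ) ^ (-3 - 1/ξ : ℝ) * (1 + ξ * y / σ) ^ 2 := by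
      rw [← Real.rpow_natCast (1 + ξ * y / σ) 2, ← Real.rpow_add hu]
      congr 1
      push_cast; ring
    simp only [hFdef, if_neg hcase, hh2def, gpdPDF, h3]
    have hden : σ ^ 2 + ξ * y * σ ≠ 0 := by
      have : (0:ℝ) < σ ^ 2 + ξ * y * σ :=
        add_pos (pow_pos hσ 2) (mul_pos (mul_pos hξ hy0) hσ)
      exact this.ne'
    field_simp
    ring
  have hEqIoi : EqOn (fun y => F y * gpdPDF ξ σ y) (fun y => C * gpdPDF ξ σ y) (Ioi Tu) := by
    intro y hy
    simp only [hFdef, if_pos (mem_Ioi.mp hy)]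
  -- tail integral of the density
  have hGderiv : ∀ x ∈ Ici Tu, HasDerivAt (fun y : ℝ => -(1 + ξ * y / σ) ^ (-1/ξ))
      (gpdPDF ξ σ x) x := fun x hx => hd_G ξ σ hξ hσ (hTu.le.trans hx)
  have hgpos : ∀ x ∈ Ioi Tu, 0 ≤ gpdPDF ξ σ x := by
    intro x hx
    have hu : (0:ℝ) < 1 + ξ * x / σ := by
      have := div_pos (mul_pos hξ (hTu.trans hx)) hσ; linarith
    exact le_of_lt (mul_pos (inv_pos.mpr hσ) (Real.rpow_pos_of_pos hu _))
  have hTail : ∫ y in Ioi Tu, gpdPDF ξ σ y = (1 + ξ * Tu / σ) ^ (-1/ξ) := by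
    rw [integral_Ioi_of_hasDerivAt_of_nonneg' hGderiv hgpos (tendsto_G ξ σ hξ hσ)]
    simp
  have hTailInt : IntegrableOn (gpdPDF ξ σ) (Ioi Tu) :=
    integrableOn_Ioi_deriv_of_nonneg' hGderiv hgpos (tendsto_G ξ σ hξ hσ)
  -- continuity of h₂ on [0, Tu]
  have hcont : ContinuousOn h₂ (Icc 0 Tu) := by
    have hbase : ContinuousOn (fun y : ℝ => 1 + ξ * y / σ) (Icc 0 Tu) :=
      (continuous_const.add ((continuous_const.mul continuous_id).div_const σ)).continuousOn
    have hne : ∀ y ∈ Icc (0:ℝ) Tu, (1 + ξ * y / σ) ≠ 0 := by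
      intro y hy
      have : (0:ℝ) < 1 + ξ * y / σ := by
        have := div_nonneg (mul_nonneg hξ.le hy.1) hσ.le; linarith
      exact this.ne'
    exact continuousOn_const.mul
      (((hbase.rpow_const fun y hy => Or.inl (hne y hy)).sub
        (continuousOn_const.mul (hbase.rpow_const fun y hy => Or.inl (hne y hy)))))
  have hIocInt : IntegrableOn (fun y => F y * gpdPDF ξ σ y) (Ioc 0 Tu) := by
    refine IntegrableOn.congr_fun ?_ hEqIoc.symm measurableSet_Ioc
    exact (hcont.integrableOn_Icc).mono_set Ioc_subset_Icc_self
  have hIoiInt : IntegrableOn (fun y => F y * gpdPDF ξ σ y) (Ioi Tu) := by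
    refine IntegrableOn.congr_fun ?_ hEqIoi.symm measurableSet_Ioi
    exact hTailInt.const_mul C
  rw [← Ioc_union_Ioi_eq_Ioi hTu.le,
    setIntegral_union (Ioc_disjoint_Ioi le_rfl) measurableSet_Ioi hIocInt hIoiInt]
  -- compute the two pieces
  have e1 : ∫ y in Ioc 0 Tu, F y * gpdPDF ξ σ y
      = ((-(ξ * σ ^ 2)⁻¹) * (1 + ξ * Tu / σ) ^ (-1/ξ)
          + ((1 + ξ) / ((2 * ξ + 1) * ξ * σ ^ 2)) * (1 + ξ * Tu / σ) ^ (-2 - 1/ξ))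
        - ((-(ξ * σ ^ 2)⁻¹) + (1 + ξ) / ((2 * ξ + 1) * ξ * σ ^ 2)) := by
    rw [setIntegral_congr_fun measurableSet_Ioc hEqIoc, ← intervalIntegral.integral_of_le hTu.le]
    have hder : ∀ y ∈ uIcc (0:ℝ) Tu, HasDerivAt (fun y : ℝ =>
        (-(ξ * σ ^ 2)⁻¹) * (1 + ξ * y / σ) ^ (-1/ξ)
        + ((1 + ξ) / ((2 * ξ + 1) * ξ * σ ^ 2)) * (1 + ξ * y / σ) ^ (-2 - 1/ξ)) (h₂ y) y := by
      intro y hy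
      rw [uIcc_of_le hTu.le] at hy
      exact hd_H ξ σ hξ hσ hy.1
    have hint : IntervalIntegrable h₂ volume 0 Tu := by
      rw [intervalIntegrable_iff_integrableOn_Ioc_of_le hTu.le]
      exact hcont.integrableOn_Icc.mono_set Ioc_subset_Icc_self
    rw [intervalIntegral.integral_eq_sub_of_hasDerivAt hder hint]
    norm_num
  have e2 : ∫ y in Ioi Tu, F y * gpdPDF ξ σ y = C * (1 + ξ * Tu / σ) ^ (-1/ξ) := by
    rw [setIntegral_congr_fun measurableSet_Ioi hEqIoi, MeasureTheory.integral_const_mul, hTail]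
  rw [e1, e2]
  -- final algebra
  have hzw : (1 + ξ * Tu / σ) ^ (-1/ξ : ℝ)
      = (1 + ξ * Tu / σ) ^ (-2 - 1/ξ : ℝ) * (1 + ξ * Tu / σ) ^ 2 := by
    rw [← Real.rpow_natCast (1 + ξ * Tu / σ) 2, ← Real.rpow_add hz]
    congr 1
    push_cast; ring
  rw [hzw, hCdef]
  generalize (1 + ξ * Tu / σ) ^ (-2 - 1/ξ : ℝ) = W
  have hden : σ ^ 2 + ξ * Tu * σ ≠ 0 :=
    (add_pos (pow_pos hσ 2) (mul_pos (mul_pos hξ hTu) hσ)).ne'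
  have h2ξ : (2 * ξ + 1 : ℝ) ≠ 0 := by positivity
  have h2ξ' : (1 + 2 * ξ : ℝ) ≠ 0 := by positivity
  field_simp
  ring
end

section
/- In the setting of the censored GPD Tobit model with z = 1 + ξT_u/σ, the Fisher information cross term E[-∂²l(ξ,σ)/∂σ∂ξ] equals 1/((1+ξ)(1+2ξ)σ) + z^{-2-1/ξ}/((1+ξ)(1+2ξ)ξ²σ) · { -(1+ξ)² + (1 - 2z)(1+ξ)(1+2ξ) + z(2+ξ)(1+2ξ) }. -/
open MeasureTheory

/-! ### Auxiliary lemmas -/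

lemma hasDerivAt_loglin (c s x : ℝ) (hx : 0 < 1 + x * c / s) :
    HasDerivAt (fun t => Real.log (1 + t * c / s)) ((c/s) / (1 + x * c / s)) x := by
  have h1 : HasDerivAt (fun t : ℝ => 1 + t * c / s) (c/s) x := by
    simpa using (((hasDerivAt_id x).mul_const c).div_const s).const_add 1
  simpa using h1.log hx.ne'

lemma hasDerivAt_neg_inv {x : ℝ} (hx : x ≠ 0) :
    HasDerivAt (fun t : ℝ => -1/t) ((x^2)⁻¹) x := by
  simpa [neg_div, one_div] using (hasDerivAt_inv hx).fun_neg

lemma tderiv_tail {ξ Tu : ℝ} (hξ : 0 < ξ) (hTu : 0 < Tu) {s : ℝ} (hs : 0 < s)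
    {y : ℝ} (hy : Tu < y) :
    deriv (fun t => cll Tu t s y) ξ
      = (ξ^2)⁻¹ * Real.log (1 + ξ * Tu / s) + (-1/ξ) * ((Tu/s) / (1 + ξ * Tu / s)) := by
  have hev : (fun t => cll Tu t s y) =ᶠ[nhds ξ] fun t => (-1/t) * Real.log (1 + t * Tu / s) := by
    filter_upwards [Ioi_mem_nhds hξ] with t ht
    have ht0 : (0:ℝ) < t := ht
    have hb : 0 < 1 + t * Tu / s := by positivity
    simp [cll, if_pos hy, gpdCDF, sub_sub_cancel, Real.log_rpow hb]
  rw [hev.deriv_eq]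
  have hb : 0 < 1 + ξ * Tu / s := by positivity
  exact ((hasDerivAt_neg_inv hξ.ne').mul (hasDerivAt_loglin Tu s ξ hb)).deriv

lemma tderiv_body {ξ Tu : ℝ} (hξ : 0 < ξ) {s : ℝ} (hs : 0 < s)
    {y : ℝ} (hy0 : 0 ≤ y) (hy : ¬ Tu < y) :
    deriv (fun t => cll Tu t s y) ξ
      = (ξ^2)⁻¹ * Real.log (1 + ξ * y / s) + (-1 - 1/ξ) * ((y/s) / (1 + ξ * y / s)) := by
  have hev : (fun t => cll Tu t s y) =ᶠ[nhds ξ]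
      fun t => Real.log s⁻¹ + (-1 - 1/t) * Real.log (1 + t * y / s) := by
    filter_upwards [Ioi_mem_nhds hξ] with t ht
    have ht0 : (0:ℝ) < t := ht
    have hb : 0 < 1 + t * y / s := by positivity
    rw [cll, if_neg hy, gpdPDF, Real.log_mul (by positivity) (Real.rpow_pos_of_pos hb _).ne',
      Real.log_rpow hb]
  rw [hev.deriv_eq]
  have hb : 0 < 1 + ξ * y / s := by positivity
  have h2 : HasDerivAt (fun t : ℝ => -1 - 1/t) ((ξ^2)⁻¹) ξ := by
    simpa [sub_eq_add_neg, neg_div] using (hasDerivAt_neg_inv hξ.ne').const_add (-1)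
  have := ((h2.mul (hasDerivAt_loglin y s ξ hb)).const_add (Real.log s⁻¹)).deriv
  simpa [sub_eq_add_neg] using this

lemma hasDerivAt_inv_lin (c : ℝ) {σ : ℝ} (hσ : σ ≠ 0) :
    HasDerivAt (fun s : ℝ => c / s) (c * -(σ^2)⁻¹) σ := by
  simpa [div_eq_mul_inv, mul_comm] using (hasDerivAt_inv hσ).const_mul c

/-- The key second-derivative computation. -/
lemma sderiv_eq {ξ σ Tu : ℝ} (hξ : 0 < ξ) (hσ : 0 < σ) (hTu : 0 < Tu)
    {y : ℝ} (hy0 : 0 < y) :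
    -(deriv (fun s => deriv (fun t => cll Tu t s y) ξ) σ)
      = if Tu < y then Tu^2 / (σ^3 * (1 + ξ * Tu / σ)^2)
        else y/(ξ*σ^2*(1+ξ*y/σ))
          + (1+1/ξ) * (ξ*y^2/(σ^3*(1+ξ*y/σ)^2) - y/(σ^2*(1+ξ*y/σ))) := by
  by_cases hy : Tu < y
  · rw [if_pos hy]
    have hev : (fun s => deriv (fun t => cll Tu t s y) ξ) =ᶠ[nhds σ]
        fun s => (ξ^2)⁻¹ * Real.log (1 + ξ * Tu / s) + (-1/ξ) * ((Tu/s) / (1 + ξ * Tu / s)) := by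
      filter_upwards [Ioi_mem_nhds hσ] with s hs
      exact tderiv_tail hξ hTu hs hy
    rw [hev.deriv_eq]
    have hz : (0:ℝ) < 1 + ξ * Tu / σ := by positivity
    have hu : HasDerivAt (fun s : ℝ => 1 + ξ * Tu / s) ((ξ*Tu) * -(σ^2)⁻¹) σ := by
      simpa [mul_div_assoc] using (hasDerivAt_inv_lin (ξ*Tu) hσ.ne').const_add 1
    have hlog := hu.log hz.ne'
    have hq := hasDerivAt_inv_lin Tu hσ.ne'
    have hdiv := hq.fun_div hu hz.ne'
    have htot := ((hlog.const_mul ((ξ^2)⁻¹)).fun_add (hdiv.const_mul (-1/ξ))).deriv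
    rw [htot]
    field_simp
    ring
  · rw [if_neg hy]
    have hev : (fun s => deriv (fun t => cll Tu t s y) ξ) =ᶠ[nhds σ]
        fun s => (ξ^2)⁻¹ * Real.log (1 + ξ * y / s) + (-1 - 1/ξ) * ((y/s) / (1 + ξ * y / s)) := by
      filter_upwards [Ioi_mem_nhds hσ] with s hs
      exact tderiv_body hξ hs hy0.le hy
    rw [hev.deriv_eq]
    have hz : (0:ℝ) < 1 + ξ * y / σ := by positivity
    have hu : HasDerivAt (fun s : ℝ => 1 + ξ * y / s) ((ξ*y) * -(σ^2)⁻¹) σ := by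
      simpa [mul_div_assoc] using (hasDerivAt_inv_lin (ξ*y) hσ.ne').const_add 1
    have hlog := hu.log hz.ne'
    have hq := hasDerivAt_inv_lin y hσ.ne'
    have hdiv := hq.fun_div hu hz.ne'
    have htot := ((hlog.const_mul ((ξ^2)⁻¹)).fun_add (hdiv.const_mul (-1 - 1/ξ))).deriv
    rw [htot]
    field_simp
    ring

/-- Antiderivative of the body integrand. -/
noncomputable def Faux (ξ σ y : ℝ) : ℝ :=
  (1/(ξ^2*σ)) * ( -((1+ξ*y/σ)^(-1/ξ : ℝ)) + ((1+2/ξ)/(1+1/ξ))*(1+ξ*y/σ)^(-1-1/ξ : ℝ)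
    - ((1+1/ξ)/(2+1/ξ))*(1+ξ*y/σ)^(-2-1/ξ : ℝ) )

lemma hasDerivAt_ulin (ξ σ x : ℝ) :
    HasDerivAt (fun y : ℝ => 1 + ξ * y / σ) (ξ/σ) x := by
  simpa using ((hasDerivAt_id x).const_mul ξ).div_const σ |>.const_add 1

lemma hasDerivAt_Faux {ξ σ : ℝ} (hξ : 0 < ξ) (hσ : 0 < σ) {x : ℝ} (hx : 0 ≤ x) :
    HasDerivAt (Faux ξ σ)
      ((x/(ξ*σ^2*(1+ξ*x/σ))
        + (1+1/ξ) * (ξ*x^2/(σ^3*(1+ξ*x/σ)^2) - x/(σ^2*(1+ξ*x/σ)))) * gpdPDF ξ σ x) x := by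
  have hu : (0:ℝ) < 1 + ξ * x / σ := by positivity
  have hlin := hasDerivAt_ulin ξ σ x
  have h1 : HasDerivAt (fun y : ℝ => (1+ξ*y/σ)^(-1/ξ : ℝ))
      ((-1/ξ) * (1+ξ*x/σ)^(-1/ξ-1 : ℝ) * (ξ/σ)) x := by
    have := (Real.hasDerivAt_rpow_const (p := -1/ξ) (Or.inl hu.ne')).comp x hlin; exact this
  have h2 : HasDerivAt (fun y : ℝ => (1+ξ*y/σ)^(-1-1/ξ : ℝ))
      ((-1-1/ξ) * (1+ξ*x/σ)^(-1-1/ξ-1 : ℝ) * (ξ/σ)) x := by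
    have := (Real.hasDerivAt_rpow_const (p := -1-1/ξ) (Or.inl hu.ne')).comp x hlin; exact this
  have h3 : HasDerivAt (fun y : ℝ => (1+ξ*y/σ)^(-2-1/ξ : ℝ))
      ((-2-1/ξ) * (1+ξ*x/σ)^(-2-1/ξ-1 : ℝ) * (ξ/σ)) x := by
    have := (Real.hasDerivAt_rpow_const (p := -2-1/ξ) (Or.inl hu.ne')).comp x hlin; exact this
  have htot := ((h1.fun_neg.fun_add (h2.const_mul ((1+2/ξ)/(1+1/ξ)))).fun_sub
      (h3.const_mul ((1+1/ξ)/(2+1/ξ)))).const_mul (1/(ξ^2*σ))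
  have heq : (fun y => (1/(ξ^2*σ)) * (-((1+ξ*y/σ)^(-1/ξ : ℝ))
      + ((1+2/ξ)/(1+1/ξ))*(1+ξ*y/σ)^(-1-1/ξ : ℝ)
      - ((1+1/ξ)/(2+1/ξ))*(1+ξ*y/σ)^(-2-1/ξ : ℝ))) = Faux ξ σ := by
    funext y; rw [Faux]
  rw [heq] at htot
  convert htot using 1
  · rfl
  · rfl
  have E1 : (1+ξ*x/σ) ^ (-1/ξ-1 : ℝ) = (1+ξ*x/σ)^(-1-1/ξ:ℝ) := by congr 1; ring
  have E2 : (1+ξ*x/σ) ^ (-1-1/ξ-1 : ℝ) = (1+ξ*x/σ)^(-1-1/ξ:ℝ) * (1+ξ*x/σ)⁻¹ := by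
    rw [show (-1-1/ξ-1:ℝ) = (-1-1/ξ)+(-1) by ring, Real.rpow_add hu, Real.rpow_neg_one]
  have E3 : (1+ξ*x/σ) ^ (-2-1/ξ-1 : ℝ)
      = (1+ξ*x/σ)^(-1-1/ξ:ℝ) * (1+ξ*x/σ)⁻¹ * (1+ξ*x/σ)⁻¹ := by
    rw [show (-2-1/ξ-1:ℝ) = ((-1-1/ξ)+(-1))+(-1) by ring, Real.rpow_add hu,
      Real.rpow_add hu, Real.rpow_neg_one]
  rw [E1, E2, E3, gpdPDF]
  have h1ξ : (1:ℝ)+1/ξ ≠ 0 := by positivity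
  have h2ξ : (2:ℝ)+1/ξ ≠ 0 := by positivity
  have hune : (1+ξ*x/σ) ≠ 0 := hu.ne'
  generalize (1+ξ*x/σ)^(-1-1/ξ:ℝ) = Q
  field_simp
  ring

lemma tail_pdf {ξ σ Tu : ℝ} (hξ : 0 < ξ) (hσ : 0 < σ) (hTu : 0 < Tu) :
    (∫ y in Set.Ioi Tu, gpdPDF ξ σ y) = (1 + ξ * Tu / σ) ^ (-1/ξ : ℝ)
      ∧ IntegrableOn (gpdPDF ξ σ) (Set.Ioi Tu) := by
  have hderiv : ∀ x ∈ Set.Ici Tu,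
      HasDerivAt (fun y => -((1+ξ*y/σ)^(-1/ξ : ℝ))) (gpdPDF ξ σ x) x := by
    intro x hx
    have hx0 : (0:ℝ) ≤ x := hTu.le.trans hx
    have hu : (0:ℝ) < 1 + ξ * x / σ := by positivity
    have h1 : HasDerivAt (fun y : ℝ => (1+ξ*y/σ)^(-1/ξ : ℝ))
        ((-1/ξ) * (1+ξ*x/σ)^(-1/ξ-1 : ℝ) * (ξ/σ)) x := by
      have := (Real.hasDerivAt_rpow_const (p := -1/ξ) (Or.inl hu.ne')).comp x (hasDerivAt_ulin ξ σ x); exact this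
    convert h1.fun_neg using 1
    · rfl
    · rfl
    rw [gpdPDF, show (-1/ξ-1 : ℝ) = (-1-1/ξ) by ring]
    field_simp
  have hpos : ∀ x ∈ Set.Ioi Tu, 0 ≤ gpdPDF ξ σ x := by
    intro x hx
    have hx0 : (0:ℝ) ≤ x := hTu.le.trans hx.le
    have hu : (0:ℝ) < 1 + ξ * x / σ := by positivity
    exact mul_nonneg (by positivity) (Real.rpow_nonneg hu.le _)
  have hlim : Filter.Tendsto (fun y => -((1+ξ*y/σ)^(-1/ξ : ℝ))) Filter.atTop (nhds 0) := by
    have hco : Filter.Tendsto (fun y : ℝ => 1 + ξ * y / σ) Filter.atTop Filter.atTop := by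
      apply Filter.tendsto_atTop_add_const_left
      exact (Filter.tendsto_id.const_mul_atTop hξ).atTop_div_const hσ
    have hr : Filter.Tendsto (fun u : ℝ => u ^ (-1/ξ : ℝ)) Filter.atTop (nhds 0) := by
      rw [show (-1/ξ : ℝ) = -(1/ξ) by ring]
      exact tendsto_rpow_neg_atTop (by positivity)
    simpa using (hr.comp hco).neg
  constructor
  · have := integral_Ioi_of_hasDerivAt_of_nonneg' hderiv hpos hlim
    rw [this]
    simp
  · exact integrableOn_Ioi_deriv_of_nonneg' hderiv hpos hlim

theorem censored_gpd_fisher_cross (ξ σ Tu : ℝ) (hξ : 0 < ξ) (hσ : 0 < σ) (hTu : 0 < Tu) :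
    ∫ y in Set.Ioi (0:ℝ),
        (-(deriv (fun s => deriv (fun t => cll Tu t s y) ξ) σ)) * gpdPDF ξ σ y
      = 1 / ((1 + ξ) * (1 + 2*ξ) * σ) +
        (1 + ξ * Tu / σ) ^ (-2 - 1/ξ) / ((1 + ξ) * (1 + 2*ξ) * ξ^2 * σ) *
          (-(1 + ξ)^2 + (1 - 2*(1 + ξ * Tu / σ)) * (1 + ξ) * (1 + 2*ξ)
            + (1 + ξ * Tu / σ) * (2 + ξ) * (1 + 2*ξ)) := by
  have hz : (0:ℝ) < 1 + ξ * Tu / σ := by positivity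
  -- pointwise identification of the integrand
  have e1 : Set.EqOn
      (fun y => (-(deriv (fun s => deriv (fun t => cll Tu t s y) ξ) σ)) * gpdPDF ξ σ y)
      (fun y => (y/(ξ*σ^2*(1+ξ*y/σ))
        + (1+1/ξ) * (ξ*y^2/(σ^3*(1+ξ*y/σ)^2) - y/(σ^2*(1+ξ*y/σ)))) * gpdPDF ξ σ y)
      (Set.Ioc 0 Tu) := by
    intro y hy
    simp only
    rw [sderiv_eq hξ hσ hTu hy.1, if_neg (not_lt.mpr hy.2)]
  have e2 : Set.EqOn
      (fun y => (-(deriv (fun s => deriv (fun t => cll Tu t s y) ξ) σ)) * gpdPDF ξ σ y)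
      (fun y => (Tu^2 / (σ^3 * (1 + ξ * Tu / σ)^2)) * gpdPDF ξ σ y)
      (Set.Ioi Tu) := by
    intro y hy
    simp only
    rw [sderiv_eq hξ hσ hTu (hTu.trans hy), if_pos (Set.mem_Ioi.mp hy)]
  -- continuity of the body integrand
  have hcont : ContinuousOn
      (fun y => (y/(ξ*σ^2*(1+ξ*y/σ))
        + (1+1/ξ) * (ξ*y^2/(σ^3*(1+ξ*y/σ)^2) - y/(σ^2*(1+ξ*y/σ)))) * gpdPDF ξ σ y)
      (Set.Icc 0 Tu) := by
    intro x hx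
    have hx0 : (0:ℝ) ≤ x := hx.1
    have hu : (0:ℝ) < 1 + ξ * x / σ := by positivity
    apply ContinuousAt.continuousWithinAt
    have hl : ContinuousAt (fun y : ℝ => 1 + ξ * y / σ) x := by fun_prop
    have hp : ContinuousAt (gpdPDF ξ σ) x := by
      have : ContinuousAt (fun y : ℝ => σ⁻¹ * (1 + ξ * y / σ) ^ (-1 - 1/ξ : ℝ)) x :=
        continuousAt_const.mul (hl.rpow_const (Or.inl hu.ne'))
      exact this
    have hq1 : ContinuousAt (fun y : ℝ => y/(ξ*σ^2*(1+ξ*y/σ))) x :=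
      continuousAt_id.div (by fun_prop) (mul_pos (by positivity) hu).ne'
    have hq2 : ContinuousAt (fun y : ℝ => ξ*y^2/(σ^3*(1+ξ*y/σ)^2)) x :=
      ContinuousAt.div (by fun_prop) (by fun_prop) (mul_pos (by positivity) (pow_pos hu 2)).ne'
    have hq3 : ContinuousAt (fun y : ℝ => y/(σ^2*(1+ξ*y/σ))) x :=
      continuousAt_id.div (by fun_prop) (mul_pos (by positivity) hu).ne'
    exact (hq1.add ((hq2.sub hq3).const_mul (1+1/ξ))).mul hp
  have ibody : IntegrableOn
      (fun y => (y/(ξ*σ^2*(1+ξ*y/σ))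
        + (1+1/ξ) * (ξ*y^2/(σ^3*(1+ξ*y/σ)^2) - y/(σ^2*(1+ξ*y/σ)))) * gpdPDF ξ σ y)
      (Set.Ioc 0 Tu) :=
    (hcont.integrableOn_Icc).mono_set Set.Ioc_subset_Icc_self
  have itail : IntegrableOn
      (fun y => (Tu^2 / (σ^3 * (1 + ξ * Tu / σ)^2)) * gpdPDF ξ σ y) (Set.Ioi Tu) :=
    (tail_pdf hξ hσ hTu).2.const_mul _
  have I1 := ibody.congr_fun e1.symm measurableSet_Ioc
  have I2 := itail.congr_fun e2.symm measurableSet_Ioi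
  have hsplit : ∫ y in Set.Ioi (0:ℝ),
      (-(deriv (fun s => deriv (fun t => cll Tu t s y) ξ) σ)) * gpdPDF ξ σ y
    = (∫ y in Set.Ioc 0 Tu,
        (-(deriv (fun s => deriv (fun t => cll Tu t s y) ξ) σ)) * gpdPDF ξ σ y)
      + ∫ y in Set.Ioi Tu,
        (-(deriv (fun s => deriv (fun t => cll Tu t s y) ξ) σ)) * gpdPDF ξ σ y := by
    rw [← setIntegral_union (Set.Ioc_disjoint_Ioi le_rfl) measurableSet_Ioi I1 I2,
      Set.Ioc_union_Ioi_eq_Ioi hTu.le]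
  rw [hsplit, setIntegral_congr_fun measurableSet_Ioc e1, setIntegral_congr_fun measurableSet_Ioi e2]
  -- body integral via FTC
  have hbv : (∫ y in Set.Ioc (0:ℝ) Tu, (y/(ξ*σ^2*(1+ξ*y/σ))
        + (1+1/ξ) * (ξ*y^2/(σ^3*(1+ξ*y/σ)^2) - y/(σ^2*(1+ξ*y/σ)))) * gpdPDF ξ σ y)
      = Faux ξ σ Tu - Faux ξ σ 0 := by
    rw [← intervalIntegral.integral_of_le hTu.le]
    apply intervalIntegral.integral_eq_sub_of_hasDerivAt
    · intro x hx
      rw [Set.uIcc_of_le hTu.le] at hx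
      exact hasDerivAt_Faux hξ hσ hx.1
    · apply ContinuousOn.intervalIntegrable
      rwa [Set.uIcc_of_le hTu.le]
  -- tail integral
  have htv : (∫ y in Set.Ioi Tu, (Tu^2 / (σ^3 * (1 + ξ * Tu / σ)^2)) * gpdPDF ξ σ y)
      = (Tu^2 / (σ^3 * (1 + ξ * Tu / σ)^2)) * (1 + ξ * Tu / σ) ^ (-1/ξ : ℝ) := by
    rw [MeasureTheory.integral_const_mul, (tail_pdf hξ hσ hTu).1]
  rw [hbv, htv]
  -- final algebra
  have r1 : (1 + ξ * Tu / σ) ^ (-1/ξ : ℝ)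
      = (1 + ξ * Tu / σ) * ((1 + ξ * Tu / σ) * (1 + ξ * Tu / σ) ^ (-2-1/ξ : ℝ)) := by
    rw [show (-1/ξ : ℝ) = 1 + (1 + (-2-1/ξ)) by ring, Real.rpow_add hz, Real.rpow_add hz,
      Real.rpow_one]
  have r2 : (1 + ξ * Tu / σ) ^ (-1-1/ξ : ℝ)
      = (1 + ξ * Tu / σ) * (1 + ξ * Tu / σ) ^ (-2-1/ξ : ℝ) := by
    rw [show (-1-1/ξ : ℝ) = 1 + (-2-1/ξ) by ring, Real.rpow_add hz, Real.rpow_one]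
  rw [Faux, Faux, r1, r2]
  norm_num [Real.one_rpow]
  have h1ξ : (1:ℝ)+1/ξ ≠ 0 := by positivity
  have h2ξ : (2:ℝ)+1/ξ ≠ 0 := by positivity
  have h3ξ : (1:ℝ)+ξ ≠ 0 := by positivity
  have h4ξ : (1:ℝ)+2*ξ ≠ 0 := by positivity
  have hzne : (1 + ξ * Tu / σ) ≠ 0 := hz.ne'
  generalize (1 + ξ * Tu / σ) ^ (-2-1/ξ : ℝ) = Q
  field_simp
  ring
end
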